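/- arXiv:1805.04906 — 4 statements merged into one kernel-verified Lean document; each statement's English description precedes it below -/
import Mathlib

section
/- The divisor D in E^n defined by the equation m_1 P_1 + ... + m_n P_n = Q (where E is an elliptic curve, m_i are integers, and Q is a point of E) is connected if and only if gcd(m_1, ..., m_n) = 1. -/
lemma my_bezout {ι : Type*} [DecidableEq ι] (s : Finset ι) (f : ι → ℤ) :
    ∃ a : ι → ℤ, ∑ i ∈ s, a i * f i = s.gcd f := by
  classical
  induction s using Finset.induction_on with
  | empty => exact ⟨0, by simp⟩
  | insert _ _ hi _ =>
    rename_i i s ih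
    obtain ⟨a, ha⟩ := ih
    rw [Finset.gcd_insert, ← Int.coe_gcd, Int.gcd_eq_gcd_ab]
    refine ⟨fun j => if j = i then Int.gcdA (f i) (s.gcd f) else a j * Int.gcdB (f i) (s.gcd f), ?_⟩
    rw [Finset.sum_insert hi]
    have : ∑ j ∈ s, (if j = i then Int.gcdA (f i) (s.gcd f) else a j * Int.gcdB (f i) (s.gcd f)) * f j
        = (∑ j ∈ s, a j * f j) * Int.gcdB (f i) (s.gcd f) := by
      rw [Finset.sum_mul]
      refine Finset.sum_congr rfl fun j hj => ?_
      rw [if_neg (by rintro rfl; exact hi hj)]; ring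
    rw [this, ha]
    simp only [if_true]
    ring

lemma my_conn_finite {X : Type*} [TopologicalSpace X] [T2Space X] {s t : Set X}
    (hs : IsPreconnected s) (hst : s ⊆ t) (ht : t.Finite) : s.Subsingleton := by
  intro x hx y hy
  by_contra hxy
  have hsf : s.Finite := ht.subset hst
  have := isPreconnected_closed_iff.mp hs {x} (s \ {x}) isClosed_singleton
    ((hsf.subset Set.diff_subset).isClosed)
    (fun z hz => by by_cases h : z = x
                    · exact Or.inl h
                    · exact Or.inr ⟨hz, h⟩)
    ⟨x, hx, rfl⟩ ⟨y, hy, hy, fun h => hxy (Set.mem_singleton_iff.mp h).symm⟩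
  obtain ⟨z, _, hz1, hz2⟩ := this
  exact hz2.2 hz1

open AddSubgroup in
lemma mp_dir
    (τ : ℂ) (hτ : τ.im ≠ 0)
    (Λ : AddSubgroup ℂ) (hΛ : Λ = AddSubgroup.closure {1, τ})
    (n : ℕ) (m : Fin n → ℤ) (hm : m ≠ 0) (Q : ℂ ⧸ Λ)
    (hconn : IsConnected {P : Fin n → ℂ ⧸ Λ | ∑ i, m i • P i = Q}) :
    Finset.univ.gcd m = 1 := by
  classical
  by_contra hg1
  set D : Set (Fin n → ℂ ⧸ Λ) := {P | ∑ i, m i • P i = Q} with hD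
  set g : ℤ := Finset.univ.gcd m with hgdef
  have hg0 : g ≠ 0 := by
    intro h
    exact hm (funext fun i => Finset.gcd_eq_zero_iff.mp h i (Finset.mem_univ i))
  have hgnn : 0 ≤ g := by
    have h1 : normalize g = g := Finset.normalize_gcd
    rw [← Int.abs_eq_normalize] at h1
    rw [← h1]; exact abs_nonneg g
  have hg2 : 2 ≤ g := by omega
  have hgC : (g : ℂ) ≠ 0 := Int.cast_ne_zero.mpr hg0
  have hgR : (g : ℝ) ≠ 0 := Int.cast_ne_zero.mpr hg0
  have hdvd : ∀ i, g ∣ m i := fun i => Finset.gcd_dvd (Finset.mem_univ i)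
  set m' : Fin n → ℤ := fun i => m i / g with hm'def
  have hm' : ∀ i, m i = g * m' i := fun i => (Int.mul_ediv_cancel' (hdvd i)).symm
  have hjex : ∃ j, ¬ g ∣ m' j := by
    by_contra h
    push_neg at h
    have hdd : g * g ∣ g := by
      refine Finset.dvd_gcd fun i _ => ?_
      rw [hm' i]
      exact mul_dvd_mul_left g (h i)
    have := Int.le_of_dvd (by omega) hdd
    nlinarith
  obtain ⟨j, hj⟩ := hjex
  have hm'j : m' j ≠ 0 := fun h => hj (h ▸ dvd_zero g)
  have hmjC : ((m j : ℂ)) ≠ 0 := by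
    rw [hm' j]; push_cast; exact mul_ne_zero hgC (Int.cast_ne_zero.mpr hm'j)
  -- the linear functional z ↦ im z / im τ
  set L : ℂ →+ ℝ := AddMonoidHom.mk' (fun z => z.im / τ.im)
    (fun x y => by simp [Complex.add_im, add_div]) with hLdef
  have hL : Λ ≤ (AddSubgroup.zmultiples (1 : ℝ)).comap L := by
    rw [hΛ, AddSubgroup.closure_le]
    rintro x hx
    simp only [Set.mem_insert_iff, Set.mem_singleton_iff] at hx
    rcases hx with h | h
    · subst h
      have : L 1 = 0 := by simp [hLdef]
      simp only [SetLike.mem_coe, AddSubgroup.mem_comap, this]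
      exact zero_mem _
    · rw [h]
      have : L τ = 1 := div_self hτ
      simp only [SetLike.mem_coe, AddSubgroup.mem_comap, this]
      exact AddSubgroup.mem_zmultiples (1:ℝ)
  set u : ℂ ⧸ Λ →+ AddCircle (1:ℝ) :=
    QuotientAddGroup.map Λ (AddSubgroup.zmultiples (1:ℝ)) L hL with hudef
  have hu_mk : ∀ z : ℂ, u ↑z = (↑(L z) : AddCircle (1:ℝ)) := fun z => rfl
  have hucont : Continuous u := by
    rw [(QuotientAddGroup.isQuotientMap_mk Λ).continuous_iff]
    exact continuous_quotient_mk'.comp (Complex.continuous_im.div_const _)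
  set f : (Fin n → ℂ ⧸ Λ) → ℂ ⧸ Λ := fun P => ∑ i, m' i • P i with hfdef
  have hfcont : Continuous f :=
    continuous_finset_sum _ fun i _ => (continuous_zsmul (m' i)).comp (continuous_apply i)
  set χ : (Fin n → ℂ ⧸ Λ) → AddCircle (1:ℝ) := fun P => u (f P) with hχdef
  have hχcont : Continuous χ := hucont.comp hfcont
  have hkey : ∀ P ∈ D, g • f P = Q := by
    intro P hP
    have h1 : g • f P = ∑ i, m i • P i := by
      rw [hfdef]
      simp only []
      rw [Finset.smul_sum]
      exact Finset.sum_congr rfl fun i _ => by rw [smul_smul, ← hm' i]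
    rw [h1]; exact hP
  have hT : ∀ P ∈ D, g • χ P = u Q := by
    intro P hP
    rw [hχdef]
    simp only []
    rw [← map_zsmul u, hkey P hP]
  -- helper for mk of zsmul
  have hms : ∀ (k : ℤ) (w : ℂ), k • (↑w : ℂ ⧸ Λ) = ↑((k : ℂ) * w) := fun k w => by
    rw [← QuotientAddGroup.mk_zsmul, zsmul_eq_mul]
  obtain ⟨q, hq⟩ := QuotientAddGroup.mk_surjective Q
  have hτΛ : τ ∈ Λ := hΛ ▸ AddSubgroup.subset_closure (by simp)
  -- base point of D
  set P0 : Fin n → ℂ ⧸ Λ := fun i => if i = j then ↑(q / (m j : ℂ)) else 0 with hP0def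
  have hP0 : P0 ∈ D := by
    show ∑ i, m i • P0 i = Q
    rw [Finset.sum_eq_single j]
    · simp only [hP0def, if_pos rfl]
      rw [hms, mul_comm, div_mul_cancel₀ q hmjC, hq]
    · intro i _ hij
      simp [hP0def, if_neg hij]
    · intro h; exact absurd (Finset.mem_univ j) h
  -- the torsion shift
  set t : ℂ ⧸ Λ := ↑(τ / (g : ℂ)) with htdef
  have hmjt : m j • t = 0 := by
    rw [htdef, hms]
    have : (m j : ℂ) * (τ / (g : ℂ)) = (m' j : ℂ) * τ := by
      rw [hm' j]; push_cast; field_simp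
    rw [this, ← zsmul_eq_mul]
    exact (QuotientAddGroup.eq_zero_iff _).mpr (AddSubgroup.zsmul_mem Λ hτΛ (m' j))
  set P1 : Fin n → ℂ ⧸ Λ := fun i => P0 i + (if i = j then t else 0) with hP1def
  have hsum : ∀ (c : Fin n → ℤ), ∑ i, c i • P1 i = (∑ i, c i • P0 i) + c j • t := by
    intro c
    rw [hP1def]
    simp only [zsmul_add]
    rw [Finset.sum_add_distrib]
    congr 1
    rw [Finset.sum_eq_single j]
    · rw [if_pos rfl]
    · intro i _ hij; rw [if_neg hij, smul_zero]
    · intro h; exact absurd (Finset.mem_univ j) h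
  have hP1 : P1 ∈ D := by
    show ∑ i, m i • P1 i = Q
    rw [hsum m, hP0, hmjt, add_zero]
  -- χ P1 = χ P0 + c with c ≠ 0
  have hfP1 : f P1 = f P0 + m' j • t := hsum m'
  have hχP1 : χ P1 = χ P0 + u (m' j • t) := by
    rw [hχdef]; simp only []
    rw [hfP1, map_add]
  have hct : u (m' j • t) = (↑((m' j : ℝ) / (g : ℝ)) : AddCircle (1:ℝ)) := by
    rw [htdef, hms, hu_mk]
    congr 1
    have h1 : (m' j : ℂ) * (τ / (g : ℂ)) = ((m' j : ℝ) / (g : ℝ)) • τ := by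
      rw [Complex.real_smul]; push_cast; field_simp
    rw [hLdef]
    simp only [AddMonoidHom.mk'_apply, h1, Complex.smul_im, smul_eq_mul]
    rw [mul_div_assoc, div_self hτ, mul_one]
  have hc0 : (↑((m' j : ℝ) / (g : ℝ)) : AddCircle (1:ℝ)) ≠ 0 := by
    intro h
    rw [AddCircle.coe_eq_zero_iff] at h
    obtain ⟨k, hk⟩ := h
    rw [zsmul_eq_mul, mul_one] at hk
    apply hj
    refine ⟨k, ?_⟩
    have : (m' j : ℝ) = (g : ℝ) * (k : ℝ) := by
      field_simp at hk
      linarith [hk]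
    exact_mod_cast this
  -- finiteness of the torsion coset
  set T : Set (AddCircle (1:ℝ)) := {x | g • x = u Q} with hTdef
  have hTfin : T.Finite := by
    refine Set.Finite.subset
      (Set.finite_range (fun k : Fin g.toNat => χ P0 + (↑(((k : ℕ) : ℝ) / (g : ℝ)) : AddCircle (1:ℝ)))) ?_
    intro x hx
    have hx' : g • x = u Q := hx
    have hdiff : g • (x - χ P0) = 0 := by
      rw [smul_sub, hx', hT P0 hP0, sub_self]
    obtain ⟨r, hr⟩ := QuotientAddGroup.mk_surjective (x - χ P0)
    have h2 : ((g • r : ℝ) : AddCircle (1:ℝ)) = 0 := by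
      rw [QuotientAddGroup.mk_zsmul, hr, hdiff]
    rw [AddCircle.coe_eq_zero_iff] at h2
    obtain ⟨k, hk⟩ := h2
    rw [zsmul_eq_mul, mul_one] at hk
    have hrk : r = (k : ℝ) / (g : ℝ) := by
      have h5 : (g : ℝ) * r = (k : ℝ) := by
        rw [hk]; rw [zsmul_eq_mul]
      field_simp
      linarith [h5]
    set k' : ℤ := k % g with hk'def
    have hk'0 : 0 ≤ k' := Int.emod_nonneg k hg0
    have hk'g : k' < g := Int.emod_lt_of_pos k (by omega)
    have hmkr : (↑r : AddCircle (1:ℝ)) = ↑((k' : ℝ) / (g : ℝ)) := by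
      have hiden : ((k : ℝ)) = (g : ℝ) * ((k / g : ℤ) : ℝ) + (k' : ℝ) := by
        exact_mod_cast (Int.mul_ediv_add_emod k g).symm
      have hsub : r - (k' : ℝ) / (g : ℝ) = ((k / g : ℤ) : ℝ) := by
        rw [hrk, hiden]
        field_simp
        ring
      have h2 : ((r - (k' : ℝ) / (g : ℝ) : ℝ) : AddCircle (1:ℝ)) = 0 := by
        rw [hsub, AddCircle.coe_eq_zero_iff]
        exact ⟨k / g, by rw [zsmul_eq_mul, mul_one]⟩
      rw [QuotientAddGroup.mk_sub] at h2
      exact sub_eq_zero.mp h2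
    refine ⟨⟨k'.toNat, by omega⟩, ?_⟩
    simp only []
    have hcast : ((k'.toNat : ℕ) : ℝ) = (k' : ℝ) := by
      exact_mod_cast Int.toNat_of_nonneg hk'0
    rw [hcast, ← hmkr, hr]
    abel
  -- conclude
  have himg : χ '' D ⊆ T := by
    rintro x ⟨P, hP, rfl⟩
    exact hT P hP
  have hsub : (χ '' D).Subsingleton :=
    my_conn_finite (hconn.isPreconnected.image χ hχcont.continuousOn) himg hTfin
  have heq : χ P0 = χ P1 := hsub ⟨P0, hP0, rfl⟩ ⟨P1, hP1, rfl⟩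
  rw [hχP1, hct, left_eq_add] at heq
  exact hc0 heq

lemma mpr_dir
    (τ : ℂ) (Λ : AddSubgroup ℂ)
    (n : ℕ) (m : Fin n → ℤ) (Q : ℂ ⧸ Λ)
    (hg : Finset.univ.gcd m = 1) :
    IsConnected {P : Fin n → ℂ ⧸ Λ | ∑ i, m i • P i = Q} := by
  classical
  obtain ⟨a, ha⟩ := my_bezout Finset.univ m
  rw [hg] at ha
  obtain ⟨q, hq⟩ := QuotientAddGroup.mk_surjective Q
  set H : Set (Fin n → ℂ) := {z | ∑ i, (m i : ℂ) * z i = q} with hH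
  -- H is convex
  have hlin : ∃ f : (Fin n → ℂ) →ₗ[ℝ] ℂ, ∀ z, f z = ∑ i, (m i : ℂ) * z i := by
    refine ⟨{ toFun := fun z => ∑ i, (m i : ℂ) * z i,
              map_add' := by intro x y; simp [mul_add, Finset.sum_add_distrib],
              map_smul' := by
                intro r z
                simp only [Pi.smul_apply, Complex.real_smul, RingHom.id_apply, Finset.mul_sum]
                exact Finset.sum_congr rfl fun i _ => by ring }, fun z => rfl⟩
  obtain ⟨f, hf⟩ := hlin
  have hconv : Convex ℝ H := by
    have : H = f ⁻¹' {q} := by ext z; simp [hH, hf]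
    rw [this]
    exact (convex_singleton q).linear_preimage f
  have hne : H.Nonempty := by
    refine ⟨fun i => (a i : ℂ) * q, ?_⟩
    have h1 : (∑ i, (a i : ℂ) * (m i : ℂ)) = 1 := by
      have := congrArg (Int.cast : ℤ → ℂ) ha
      push_cast at this
      simpa using this
    simp only [hH, Set.mem_setOf_eq]
    calc ∑ i, (m i : ℂ) * ((a i : ℂ) * q) = (∑ i, (a i : ℂ) * (m i : ℂ)) * q := by
          rw [Finset.sum_mul]; exact Finset.sum_congr rfl fun i _ => by ring
      _ = q := by rw [h1, one_mul]
  set F : (Fin n → ℂ) → (Fin n → ℂ ⧸ Λ) := fun z i => ↑(z i) with hF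
  have hcont : Continuous F :=
    continuous_pi fun i => continuous_quotient_mk'.comp (continuous_apply i)
  have hmk : ∀ (w : Fin n → ℂ), ((∑ i, m i • w i : ℂ) : ℂ ⧸ Λ) = ∑ i, m i • (↑(w i) : ℂ ⧸ Λ) := by
    intro w
    rw [show ((∑ i, m i • w i : ℂ) : ℂ ⧸ Λ) = QuotientAddGroup.mk' Λ (∑ i, m i • w i) from rfl,
      map_sum]
    exact Finset.sum_congr rfl fun i _ => by
      rw [show (QuotientAddGroup.mk' Λ) (m i • w i) = ((m i • w i : ℂ) : ℂ ⧸ Λ) from rfl,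
        QuotientAddGroup.mk_zsmul]
  have himg : F '' H = {P : Fin n → ℂ ⧸ Λ | ∑ i, m i • P i = Q} := by
    ext P
    constructor
    · rintro ⟨z, hz, rfl⟩
      simp only [Set.mem_setOf_eq, hF]
      calc ∑ i, m i • (↑(z i) : ℂ ⧸ Λ) = ↑(∑ i, m i • z i) := (hmk z).symm
        _ = Q := by
            rw [show (∑ i, m i • z i) = q by
              simpa [zsmul_eq_mul, hH] using hz, hq]
    · intro hP
      choose z hz using fun i => QuotientAddGroup.mk_surjective (P i)
      have hw : ((∑ i, m i • z i : ℂ) : ℂ ⧸ Λ) = ↑q := by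
        rw [hmk z, hq]
        simp only [hz]
        exact hP
      rw [QuotientAddGroup.eq_iff_sub_mem] at hw
      set l : ℂ := (∑ i, m i • z i) - q with hl
      refine ⟨fun i => z i - (a i : ℂ) * l, ?_, ?_⟩
      · simp only [hH, Set.mem_setOf_eq]
        have : ∑ i, (m i : ℂ) * (z i - (a i : ℂ) * l)
            = (∑ i, (m i : ℂ) * z i) - (∑ i, (a i : ℂ) * (m i : ℂ)) * l := by
          rw [Finset.sum_mul]
          rw [← Finset.sum_sub_distrib]
          exact Finset.sum_congr rfl fun i _ => by ring
        rw [this]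
        have h1 : (∑ i, (a i : ℂ) * (m i : ℂ)) = 1 := by
          have := congrArg (Int.cast : ℤ → ℂ) ha
          push_cast at this
          simpa using this
        have h2 : (∑ i, (m i : ℂ) * z i) = q + l := by
          rw [hl]; simp [zsmul_eq_mul]
        rw [h1, h2]; ring
      · funext i
        have hal : (a i : ℂ) * l ∈ Λ := by
          simpa [zsmul_eq_mul] using AddSubgroup.zsmul_mem Λ hw (a i)
        simp only [hF]
        rw [show z i - (a i : ℂ) * l = z i + (-((a i : ℂ) * l)) by ring]
        rw [QuotientAddGroup.mk_add]
        rw [(QuotientAddGroup.eq_zero_iff _).mpr (neg_mem hal)]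
        rw [add_zero, hz]
  rw [← himg]
  exact (hconv.isConnected hne).image F hcont.continuousOn


/-- The divisor `D ⊆ Eⁿ` defined by `∑ mᵢ Pᵢ = Q`, where `E = ℂ/Λ` is an
elliptic curve (a complex torus) and the `mᵢ` are integers (not all zero, so that `D` is
a divisor), is connected if and only if `gcd(m₁,…,mₙ) = 1`. -/
theorem divisor_connected_iff_gcd_eq_one
    (τ : ℂ) (hτ : τ.im ≠ 0)
    (Λ : AddSubgroup ℂ) (hΛ : Λ = AddSubgroup.closure {1, τ})
    (n : ℕ) (m : Fin n → ℤ) (hm : m ≠ 0) (Q : ℂ ⧸ Λ) :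
    IsConnected {P : Fin n → ℂ ⧸ Λ | ∑ i, m i • P i = Q} ↔
      Finset.univ.gcd m = 1 := by
  exact ⟨mp_dir τ hτ Λ hΛ n m hm Q, mpr_dir τ Λ n m Q⟩
end

section
/- The alternating sum Σ_{i=0}^{n-1-k} (-1)^i · [n, k+i+1] · binomial(k+i, k) equals [n-1, k], where [a,b] denotes the unsigned Stirling number of the first kind. -/
/-- The unsigned Stirling numbers of the first kind: `stirling1 n m` counts permutations of an
`n`-element set with exactly `m` cycles. -/
def stirling1 : ℕ → ℕ → ℕ
  | 0, 0 => 1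
  | 0, _ + 1 => 0
  | _ + 1, 0 => 0
  | n + 1, m + 1 => stirling1 n m + n * stirling1 n (m + 1)

lemma stirling1_zero_right (n : ℕ) : n * stirling1 n 0 = 0 := by
  cases n <;> simp [stirling1]

lemma stirling1_eq_zero : ∀ {n m : ℕ}, n < m → stirling1 n m = 0 := by
  intro n
  induction n with
  | zero => intro m h; cases m with | zero => omega | succ m => rfl
  | succ n ih =>
    intro m h
    cases m with
    | zero => omega
    | succ m =>
      show stirling1 n m + n * stirling1 n (m + 1) = 0
      rw [ih (by omega), ih (by omega)]; ring

lemma stirling1_succ_eq_sum (n m : ℕ) :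
    stirling1 (n + 1) (m + 1) = ∑ j ∈ Finset.range (n + 1), stirling1 n j * j.choose m := by
  induction n generalizing m with
  | zero => cases m <;> simp [stirling1]
  | succ n ih =>
    have hB : ∑ i ∈ Finset.range (n + 1), stirling1 n (i + 1) * (i + 1).choose m =
        ∑ i ∈ Finset.range n, stirling1 n (i + 1) * (i + 1).choose m := by
      rw [Finset.sum_range_succ, stirling1_eq_zero (by omega)]
      simp
    have hG : ∑ j ∈ Finset.range (n + 1), stirling1 n j * j.choose m =
        stirling1 n 0 * Nat.choose 0 m +
          ∑ i ∈ Finset.range n, stirling1 n (i + 1) * (i + 1).choose m := by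
      rw [Finset.sum_range_succ']
      ring
    rw [Finset.sum_range_succ']
    have hrec : ∀ i, stirling1 (n + 1) (i + 1) = stirling1 n i + n * stirling1 n (i + 1) := by
      intro i; rfl
    simp only [hrec]
    have h0 : stirling1 (n + 1) 0 = 0 := rfl
    rw [h0]
    simp only [Finset.sum_add_distrib, add_mul, Nat.mul_assoc, ← Finset.mul_sum]
    rw [hB]
    cases m with
    | zero =>
      have hA : ∑ i ∈ Finset.range (n + 1), stirling1 n i * (i + 1).choose 0 =
          ∑ j ∈ Finset.range (n + 1), stirling1 n j * j.choose 0 := by simp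
      rw [hA]
      have h2 : stirling1 (n + 1 + 1) 1 = stirling1 (n + 1) 0 + (n + 1) * stirling1 (n + 1) 1 := rfl
      rw [h2, h0, ih 0]
      rw [hG]
      have := stirling1_zero_right n
      cases n with
      | zero => simp [stirling1]
      | succ n => simp only [stirling1] ; ring
    | succ m' =>
      have hA : ∑ i ∈ Finset.range (n + 1), stirling1 n i * (i + 1).choose (m' + 1) =
          (∑ j ∈ Finset.range (n + 1), stirling1 n j * j.choose (m' + 1)) +
          ∑ j ∈ Finset.range (n + 1), stirling1 n j * j.choose m' := by
        rw [← Finset.sum_add_distrib]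
        apply Finset.sum_congr rfl
        intro i _
        rw [Nat.choose_succ_succ]
        ring
      rw [hA, ← ih, ← ih]
      have hBG : ∑ i ∈ Finset.range n, stirling1 n (i + 1) * (i + 1).choose (m' + 1) =
          stirling1 (n + 1) (m' + 2) := by
        rw [ih (m' + 1)]
        rw [Finset.sum_range_succ']
        simp
      rw [hBG]
      have h2 : stirling1 (n + 1 + 1) (m' + 1 + 1) =
          stirling1 (n + 1) (m' + 1) + (n + 1) * stirling1 (n + 1) (m' + 1 + 1) := rfl
      rw [h2]
      ring

lemma choose_mul_choose' (j k i : ℕ) :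
    j.choose (k + i) * (k + i).choose k = j.choose k * (j - k).choose i := by
  rcases le_or_gt (k + i) j with hle | hlt
  · rw [Nat.choose_mul (Nat.le_add_right k i), Nat.add_sub_cancel_left]
  · rw [Nat.choose_eq_zero_of_lt hlt]
    rcases le_or_gt k j with hk | hk
    · rw [Nat.choose_eq_zero_of_lt (by omega : j - k < i)]; ring
    · rw [Nat.choose_eq_zero_of_lt hk]; ring

lemma alt_sum_choose (d M : ℕ) (h : d < M) :
    (∑ i ∈ Finset.range M, (-1 : ℤ) ^ i * d.choose i) = if d = 0 then 1 else 0 := by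
  rw [← Int.alternating_sum_range_choose]
  symm
  apply Finset.sum_subset (Finset.range_subset_range.2 h)
  intro x _ hnx
  rw [Finset.mem_range, not_lt] at hnx
  rw [Nat.choose_eq_zero_of_lt (by omega)]
  simp

/-- `Σ_{i=0}^{n-1-k} (-1)^i [n, k+i+1] C(k+i, k) = [n-1, k]`. -/
theorem alternating_sum_stirling1 (n k : ℕ) (h : k < n) :
    (∑ i ∈ Finset.range (n - k),
        (-1 : ℤ) ^ i * stirling1 n (k + i + 1) * (k + i).choose k) =
      stirling1 (n - 1) k := by
  obtain ⟨N, rfl⟩ : ∃ N, n = N + 1 := ⟨n - 1, by omega⟩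
  have hk : k ≤ N := by omega
  simp only [Nat.add_sub_cancel]
  calc (∑ i ∈ Finset.range (N + 1 - k),
        (-1 : ℤ) ^ i * stirling1 (N + 1) (k + i + 1) * (k + i).choose k)
      = ∑ i ∈ Finset.range (N + 1 - k), ∑ j ∈ Finset.range (N + 1),
          (stirling1 N j : ℤ) * ((-1) ^ i * (j.choose k * (j - k).choose i)) := by
        apply Finset.sum_congr rfl
        intro i _
        rw [stirling1_succ_eq_sum]
        push_cast [Finset.sum_mul, Finset.mul_sum]
        apply Finset.sum_congr rfl
        intro j _
        have hc : ((j.choose k : ℤ)) * ((j - k).choose i : ℤ) =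
            (j.choose (k + i) : ℤ) * ((k + i).choose k : ℤ) := by
          rw [← Nat.cast_mul, ← Nat.cast_mul, choose_mul_choose']
        linear_combination (-(-1 : ℤ) ^ i * (stirling1 N j : ℤ)) * hc
    _ = ∑ j ∈ Finset.range (N + 1), (stirling1 N j : ℤ) * (j.choose k *
          ∑ i ∈ Finset.range (N + 1 - k), (-1 : ℤ) ^ i * (j - k).choose i) := by
        rw [Finset.sum_comm]
        apply Finset.sum_congr rfl
        intro j _
        rw [Finset.mul_sum, Finset.mul_sum]
        apply Finset.sum_congr rfl
        intro i _
        ring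
    _ = ∑ j ∈ Finset.range (N + 1), (stirling1 N j : ℤ) *
          (if j = k then 1 else 0) := by
        apply Finset.sum_congr rfl
        intro j hj
        rw [Finset.mem_range] at hj
        congr 1
        rcases le_or_gt k j with hkj | hkj
        · rw [alt_sum_choose (j - k) (N + 1 - k) (by omega)]
          rcases eq_or_ne j k with rfl | hne
          · simp
          · rw [if_neg (by omega), if_neg hne]
            ring
        · rw [Nat.choose_eq_zero_of_lt hkj, if_neg (by omega)]
          simp
    _ = stirling1 N k := by
        simp only [mul_ite, mul_one, mul_zero]
        rw [Finset.sum_ite_eq' (Finset.range (N + 1))]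
        simp [Finset.mem_range, Nat.lt_succ_of_le hk]
end

section
/- Let C = (c_1, ..., c_k) be a circuit (an oriented simple cycle with a starting vertex) in K_n and let C~ be the circuit obtained from C by reversing the orientation. Then the element L_{C~} = (−1)^{binomial(k−2,2)} L_C, where L_C = Σ_{1 ≤ i < j ≤ k} (−1)^{i+j} (x_{t(c_i)} − x_{s(c_i)}) ω_{C∖{c_i,c_j}} in the exterior-algebra model. -/
open ExteriorAlgebra

/-- The free exterior algebra on anticommuting degree-one generators `x_i` (`i ∈ Fin n`)
and `ω_e` (`e` an unordered edge of `K_n`). -/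
abbrev FreeExt (n : ℕ) := ExteriorAlgebra ℚ ((Fin n ⊕ Sym2 (Fin n)) → ℚ)

/-- The generator `x_i`. -/
noncomputable def xgen (n : ℕ) (i : Fin n) : FreeExt n :=
  ExteriorAlgebra.ι ℚ (Pi.single (Sum.inl i) 1)

/-- The generator `ω_e` for an unordered edge `e` (so `ω_{i,j} = ω_{j,i}`). -/
noncomputable def wgen (n : ℕ) (e : Sym2 (Fin n)) : FreeExt n :=
  ExteriorAlgebra.ι ℚ (Pi.single (Sum.inr e) 1)

/-- The relations of the (Kriz/Bibby) model: `(x_i − x_j)·ω_{i,j} = 0` and the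
Orlik–Solomon (Arnold) relations `ω_{ij}ω_{jk} + ω_{jk}ω_{ik} + ω_{ik}ω_{ij} = 0`. -/
inductive ModelRel (n : ℕ) : FreeExt n → FreeExt n → Prop
  | xrel (i j : Fin n) : ModelRel n ((xgen n i - xgen n j) * wgen n s(i, j)) 0
  | arnold (i j k : Fin n) :
      ModelRel n (wgen n s(i, j) * wgen n s(j, k) + wgen n s(j, k) * wgen n s(i, k) +
        wgen n s(i, k) * wgen n s(i, j)) 0

/-- The quotient algebra by the model relations. -/
abbrev ModelAlg (n : ℕ) := RingQuot (ModelRel n)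

noncomputable def xq (n : ℕ) (i : Fin n) : ModelAlg n :=
  RingQuot.mkAlgHom ℚ (ModelRel n) (xgen n i)

noncomputable def wq (n : ℕ) (e : Sym2 (Fin n)) : ModelAlg n :=
  RingQuot.mkAlgHom ℚ (ModelRel n) (wgen n e)

/-- `ω_{C ∖ {c_i, c_j}}`: the ordered product of the generators of the remaining edges of the
circuit `C` (edges being recorded as ordered pairs `(s(c), t(c))`). -/
noncomputable def omegaRest (n k : ℕ) (C : Fin k → Fin n × Fin n) (i j : Fin k) : ModelAlg n :=
  (((List.finRange k).filter (fun a => a ≠ i ∧ a ≠ j)).map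
    (fun a => wq n (Sym2.mk (C a).1 (C a).2))).prod

/-- `L_C = Σ_{i<j} (−1)^{i+j} (x_{t(c_i)} − x_{s(c_i)}) ω_{C∖{c_i,c_j}}`. -/
noncomputable def Lelt (n k : ℕ) (C : Fin k → Fin n × Fin n) : ModelAlg n :=
  ∑ p ∈ Finset.univ.filter (fun p : Fin k × Fin k => p.1 < p.2),
    ((-1 : ℚ) ^ ((p.1 : ℕ) + (p.2 : ℕ))) •
      ((xq n (C p.1).2 - xq n (C p.1).1) * omegaRest n k C p.1 p.2)

section Helpers
variable {n : ℕ}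


lemma wq_anticomm (e f : Sym2 (Fin n)) : wq n e * wq n f = -(wq n f * wq n e) := by
  apply eq_neg_of_add_eq_zero_left
  rw [wq, wq, ← map_mul, ← map_mul, ← map_add, wgen, wgen, ι_add_mul_swap, map_zero]

lemma xq_wq_anticomm (a : Fin n) (e : Sym2 (Fin n)) : xq n a * wq n e = -(wq n e * xq n a) := by
  apply eq_neg_of_add_eq_zero_left
  rw [xq, wq, ← map_mul, ← map_mul, ← map_add, xgen, wgen, ι_add_mul_swap, map_zero]

lemma xrel' (a b : Fin n) : (xq n a - xq n b) * wq n s(a, b) = 0 := by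
  have h := RingQuot.mkAlgHom_rel ℚ (ModelRel.xrel (n := n) a b)
  rw [map_mul, map_sub, map_zero] at h
  exact h

lemma xdiff_wq (a b : Fin n) (e : Sym2 (Fin n)) :
    (xq n a - xq n b) * wq n e = -(wq n e * (xq n a - xq n b)) := by
  rw [sub_mul, xq_wq_anticomm, xq_wq_anticomm, mul_sub]
  abel

lemma annih (a b : Fin n) : ∀ l : List (Sym2 (Fin n)), s(a, b) ∈ l →
    (xq n a - xq n b) * (l.map (wq n)).prod = 0 := by
  intro l
  induction l with
  | nil => simp
  | cons e t ih =>
    intro h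
    rw [List.map_cons, List.prod_cons, ← mul_assoc]
    rcases List.mem_cons.mp h with he | ht
    · rw [← he, xrel', zero_mul]
    · rw [xdiff_wq, neg_mul, mul_assoc, ih ht, mul_zero, neg_zero]

lemma prod_mul_wq (l : List (Sym2 (Fin n))) (e : Sym2 (Fin n)) :
    (l.map (wq n)).prod * wq n e =
      ((-1 : ℚ) ^ l.length) • (wq n e * (l.map (wq n)).prod) := by
  induction l with
  | nil => simp
  | cons f t ih =>
    rw [List.map_cons, List.prod_cons, mul_assoc, ih, List.length_cons, pow_succ,
      mul_smul_comm, ← mul_assoc, wq_anticomm f e, neg_mul, mul_assoc, mul_neg_one, smul_neg,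
      ← neg_smul]

lemma reverse_prod (l : List (Sym2 (Fin n))) :
    (l.reverse.map (wq n)).prod =
      ((-1 : ℚ) ^ (l.length.choose 2)) • (l.map (wq n)).prod := by
  induction l with
  | nil => simp
  | cons e t ih =>
    rw [List.reverse_cons, List.map_append, List.prod_append, ih, List.map_cons,
      List.prod_cons, List.map_nil, List.prod_nil, mul_one, smul_mul_assoc, prod_mul_wq,
      List.length_cons, Nat.choose_succ_succ, Nat.choose_one_right, smul_smul,
      ← pow_add, List.map_cons, List.prod_cons]
    ring_nf

/-- the list of unordered edges of `C` with `i, j` removed -/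
def edgeList (n k : ℕ) (C : Fin k → Fin n × Fin n) (i j : Fin k) : List (Sym2 (Fin n)) :=
  ((List.finRange k).filter (fun a => a ≠ i ∧ a ≠ j)).map (fun a => Sym2.mk (C a).1 (C a).2)

lemma omegaRest_eq (k : ℕ) (C : Fin k → Fin n × Fin n) (i j : Fin k) :
    omegaRest n k C i j = ((edgeList n k C i j).map (wq n)).prod := by
  rw [edgeList, List.map_map]; rfl

def idx (k : ℕ) [NeZero k] (m : ℕ) : Fin k :=
  ⟨m % k, Nat.mod_lt _ (Nat.pos_of_ne_zero (NeZero.ne k))⟩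

lemma idx_succ {k : ℕ} [NeZero k] (t : ℕ) : idx k (t + 1) = idx k t + 1 := by
  apply Fin.ext
  rw [Fin.val_add, Fin.val_one']
  show (t + 1) % k = (t % k + 1 % k) % k
  rw [Nat.add_mod]

lemma edge_mem (k : ℕ) (C : Fin k → Fin n × Fin n) (i j a : Fin k) (hai : a ≠ i) (haj : a ≠ j) :
    s((C a).1, (C a).2) ∈ edgeList n k C i j := by
  have : Sym2.mk (C a).1 (C a).2 ∈ edgeList n k C i j :=
    List.mem_map_of_mem (List.mem_filter.mpr ⟨List.mem_finRange a, by simp [hai, haj]⟩)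
  simpa using this

lemma telescope (k : ℕ) [NeZero k] (C : Fin k → Fin n × Fin n)
    (hcirc : ∀ i, (C i).2 = (C (i + 1)).1) (i j : Fin k) :
    ∀ (d m₀ : ℕ), (∀ t, m₀ ≤ t → t < m₀ + d → idx k t ≠ i ∧ idx k t ≠ j) →
      (xq n (C (idx k m₀)).1 - xq n (C (idx k (m₀ + d))).1) * omegaRest n k C i j = 0 := by
  intro d
  induction d with
  | zero => intro m₀ _; simp
  | succ d ih =>
    intro m₀ hgood
    have h0 := hgood m₀ le_rfl (by omega)
    have step : (xq n (C (idx k m₀)).1 - xq n (C (idx k (m₀ + 1))).1) * omegaRest n k C i j = 0 := by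
      rw [idx_succ, ← hcirc (idx k m₀), omegaRest_eq]
      exact annih _ _ _ (edge_mem k C i j (idx k m₀) h0.1 h0.2)
    have rest : (xq n (C (idx k (m₀ + 1))).1 - xq n (C (idx k (m₀ + 1 + d))).1) *
        omegaRest n k C i j = 0 := ih (m₀ + 1) (fun t ht ht' => hgood t (by omega) (by omega))
    have : m₀ + (d + 1) = m₀ + 1 + d := by omega
    rw [this]
    calc (xq n (C (idx k m₀)).1 - xq n (C (idx k (m₀ + 1 + d))).1) * omegaRest n k C i j
        = (xq n (C (idx k m₀)).1 - xq n (C (idx k (m₀ + 1))).1) * omegaRest n k C i j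
          + (xq n (C (idx k (m₀ + 1))).1 - xq n (C (idx k (m₀ + 1 + d))).1) * omegaRest n k C i j := by
          rw [← add_mul]; congr 1; abel
      _ = 0 := by rw [step, rest, add_zero]

lemma idx_val {k : ℕ} [NeZero k] (m : ℕ) : (idx k m).val = m % k := rfl

lemma key (k : ℕ) [NeZero k] (C : Fin k → Fin n × Fin n)
    (hcirc : ∀ i, (C i).2 = (C (i + 1)).1) (i j : Fin k) (hij : i < j) :
    (xq n (C j).1 - xq n (C j).2) * omegaRest n k C i j =
      (xq n (C i).2 - xq n (C i).1) * omegaRest n k C i j := by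
  have hjk : (j : ℕ) < k := j.isLt
  have hij' : (i : ℕ) < (j : ℕ) := hij
  have hk2 : 2 ≤ k := by omega
  have h1k : 1 % k = 1 := Nat.mod_eq_of_lt (by omega)
  -- index identities
  have e_i1 : idx k ((i : ℕ) + 1) = i + 1 := by
    apply Fin.ext; rw [idx_val, Fin.val_add, Fin.val_one', h1k]
  have e_j : idx k (j : ℕ) = j := by
    apply Fin.ext; rw [idx_val, Nat.mod_eq_of_lt hjk]
  have e_j1 : idx k ((j : ℕ) + 1) = j + 1 := by
    apply Fin.ext; rw [idx_val, Fin.val_add, Fin.val_one', h1k]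
  have e_ik : idx k ((i : ℕ) + k) = i := by
    apply Fin.ext; rw [idx_val, Nat.add_mod_right, Nat.mod_eq_of_lt (by omega)]
  -- first telescoping: from i+1 to j
  have h1 : (xq n (C i).2 - xq n (C j).1) * omegaRest n k C i j = 0 := by
    have := telescope k C hcirc i j ((j : ℕ) - (i : ℕ) - 1) ((i : ℕ) + 1) ?_
    · rwa [show (i : ℕ) + 1 + ((j : ℕ) - (i : ℕ) - 1) = (j : ℕ) by omega, e_i1, e_j,
        ← hcirc i] at this
    · intro t ht ht'
      have hm : t % k = t := Nat.mod_eq_of_lt (by omega)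
      exact ⟨Fin.ne_of_val_ne (by rw [idx_val, hm]; omega),
        Fin.ne_of_val_ne (by rw [idx_val, hm]; omega)⟩
  -- second telescoping: from j+1 around to i
  have h2 : (xq n (C j).2 - xq n (C i).1) * omegaRest n k C i j = 0 := by
    have := telescope k C hcirc i j (k + (i : ℕ) - (j : ℕ) - 1) ((j : ℕ) + 1) ?_
    · rwa [show (j : ℕ) + 1 + (k + (i : ℕ) - (j : ℕ) - 1) = (i : ℕ) + k by omega, e_j1, e_ik,
        ← hcirc j] at this
    · intro t ht ht'
      have hm : (t < k ∧ t % k = t) ∨ (k ≤ t ∧ t % k = t - k) := by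
        rcases Nat.lt_or_ge t k with h | h
        · exact Or.inl ⟨h, Nat.mod_eq_of_lt h⟩
        · exact Or.inr ⟨h, by rw [Nat.mod_eq_sub_mod h, Nat.mod_eq_of_lt (by omega)]⟩
      exact ⟨Fin.ne_of_val_ne (by rw [idx_val]; rcases hm with ⟨h, hm⟩ | ⟨h, hm⟩ <;> rw [hm] <;> omega),
        Fin.ne_of_val_ne (by rw [idx_val]; rcases hm with ⟨h, hm⟩ | ⟨h, hm⟩ <;> rw [hm] <;> omega)⟩
  have hsum : (xq n (C j).1 - xq n (C j).2) - (xq n (C i).2 - xq n (C i).1)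
      = -((xq n (C i).2 - xq n (C j).1) + (xq n (C j).2 - xq n (C i).1)) := by abel
  rw [← sub_eq_zero, ← sub_mul, hsum, neg_mul, add_mul, h1, h2, add_zero, neg_zero]

lemma edgeList_length (k : ℕ) (C : Fin k → Fin n × Fin n) (i j : Fin k) (h : i ≠ j) :
    (edgeList n k C i j).length = k - 2 := by
  rw [edgeList, List.length_map]
  have h1 : (((List.finRange k).filter (fun a => a ≠ i ∧ a ≠ j))).length
      = (Finset.univ.filter (fun a : Fin k => a ≠ i ∧ a ≠ j)).card := rfl
  have h2 : Finset.univ.filter (fun a : Fin k => a ≠ i ∧ a ≠ j) = ({i, j} : Finset (Fin k))ᶜ := by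
    ext a; simp [not_or]
  rw [h1, h2, Finset.card_compl, Finset.card_insert_of_notMem (by simp [h]),
    Finset.card_singleton, Fintype.card_fin]

lemma rev_edgeList (k : ℕ) (C : Fin k → Fin n × Fin n) (i j : Fin k) :
    edgeList n k (fun a => Prod.swap (C (Fin.rev a))) i j
      = (edgeList n k C j.rev i.rev).reverse := by
  unfold edgeList
  have hswap : ((List.finRange k).filter (fun a => a ≠ i ∧ a ≠ j)).map
        (fun a => Sym2.mk (Prod.swap (C (Fin.rev a))).1 (Prod.swap (C (Fin.rev a))).2)
      = ((List.finRange k).filter (fun a => a ≠ i ∧ a ≠ j)).map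
        (fun a => Sym2.mk (C (Fin.rev a)).1 (C (Fin.rev a)).2) := by
    apply List.map_congr_left
    intro a _
    obtain ⟨x, y⟩ := C (Fin.rev a)
    exact Sym2.eq_swap
  rw [hswap]
  have hmm : ((List.finRange k).filter (fun a => a ≠ i ∧ a ≠ j)).map
        (fun a => Sym2.mk (C (Fin.rev a)).1 (C (Fin.rev a)).2)
      = (((List.finRange k).filter (fun a => a ≠ i ∧ a ≠ j)).map Fin.rev).map
        (fun a => Sym2.mk (C a).1 (C a).2) := by
    rw [List.map_map]; rfl
  rw [hmm, ← List.map_reverse]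
  congr 1
  rw [← List.filter_reverse, List.finRange_reverse, List.filter_map]
  congr 1
  apply List.filter_congr
  intro a _
  simp only [Function.comp, decide_eq_decide]
  constructor
  · rintro ⟨h1, h2⟩
    exact ⟨fun hh => h2 (Fin.rev_inj.mp hh), fun hh => h1 (Fin.rev_inj.mp hh)⟩
  · rintro ⟨h1, h2⟩
    exact ⟨fun hh => h2 (by rw [hh]), fun hh => h1 (by rw [hh])⟩

lemma neg_one_pow_congr' {a b : ℕ} (h : a % 2 = b % 2) : ((-1 : ℚ)) ^ a = (-1) ^ b := by
  rcases Nat.even_or_odd a with ha | ha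
  · rw [ha.neg_one_pow, (Nat.even_iff.mpr (by rw [← Nat.even_iff.mp ha, h])).neg_one_pow]
  · rw [ha.neg_one_pow, (Nat.odd_iff.mpr (by rw [← Nat.odd_iff.mp ha, h])).neg_one_pow]

end Helpers

/-- For a circuit `C = (c_1,…,c_k)` in `K_n` (an oriented simple cycle with a
starting vertex: consecutive edges composable cyclically, with pairwise distinct sources),
the reversed circuit `C~` (edges reversed and taken in the opposite order) satisfies
`L_{C~} = (−1)^{binom(k−2,2)} · L_C` in the model algebra. -/
theorem L_reverse_circuit (n k : ℕ) [NeZero k] (C : Fin k → Fin n × Fin n)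
    (hcirc : ∀ i, (C i).2 = (C (i + 1)).1)
    (hinj : Function.Injective (fun i => (C i).1)) :
    Lelt n k (fun i => Prod.swap (C (Fin.rev i))) =
      ((-1 : ℚ) ^ ((k - 2).choose 2)) • Lelt n k C := by
  rw [Lelt, Lelt, Finset.smul_sum]
  refine Finset.sum_nbij' (fun p : Fin k × Fin k => (p.2.rev, p.1.rev))
    (fun q : Fin k × Fin k => (q.2.rev, q.1.rev)) ?_ ?_ ?_ ?_ ?_
  · intro p hp
    simp only [Finset.mem_filter, Finset.mem_univ, true_and] at *
    exact Fin.rev_lt_rev.mpr hp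
  · intro p hp
    simp only [Finset.mem_filter, Finset.mem_univ, true_and] at *
    exact Fin.rev_lt_rev.mpr hp
  · intro p _; simp [Fin.rev_rev]
  · intro p _; simp [Fin.rev_rev]
  · rintro ⟨i, j⟩ hp
    simp only [Finset.mem_filter, Finset.mem_univ, true_and] at hp
    have hij' : j.rev < i.rev := Fin.rev_lt_rev.mpr hp
    have hne : j.rev ≠ i.rev := ne_of_lt hij'
    -- the omega part
    have homega : omegaRest n k (fun a => Prod.swap (C (Fin.rev a))) i j
        = ((-1 : ℚ) ^ ((k - 2).choose 2)) • omegaRest n k C j.rev i.rev := by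
      rw [omegaRest_eq, rev_edgeList, reverse_prod, edgeList_length k C j.rev i.rev hne,
        ← omegaRest_eq]
    -- the x part
    have hx : (xq n ((fun a => Prod.swap (C (Fin.rev a))) i).2
          - xq n ((fun a => Prod.swap (C (Fin.rev a))) i).1)
        = (xq n (C i.rev).1 - xq n (C i.rev).2) := by
      simp
    rw [hx, homega, mul_smul_comm, smul_smul, smul_smul,
      key k C hcirc j.rev i.rev hij']
    congr 1
    rw [mul_comm]
    congr 1
    apply neg_one_pow_congr'
    dsimp only
    rw [Fin.val_rev, Fin.val_rev]
    have hik : (i : ℕ) < k := i.isLt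
    have hjk : (j : ℕ) < k := j.isLt
    omega
end

section
/- For every circuit C = (c_1,...,c_k) in K_n, the element L_C = Σ_{1≤i<j≤k} (−1)^{i+j} (x_{t(c_i)} − x_{s(c_i)}) ω_{C∖{c_i,c_j}} lies in the kernel of the differential d_2 of the Kriz/Bibby model E_2 for the braid elliptic arrangement; i.e., d_2(L_C) = 0. -/
/-- `a` is one of the (odd, degree-one) generators `x_i`, `y_i`, `ω_e` of the Kriz/Bibby
model `E₂` for the braid elliptic arrangement. -/
def IsGen {n : ℕ} {A : Type*} (x y : Fin n → A) (w : Sym2 (Fin n) → A) (a : A) : Prop :=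
  (∃ i, a = x i) ∨ (∃ i, a = y i) ∨ (∃ e, a = w e)

section PureRing
variable {A : Type*} [Ring A]

lemma odd_pair_comm (g u v : A) (hu : g * u = -(u * g)) (hv : g * v = -(v * g)) :
    g * (u * v) = u * v * g := by
  rw [← mul_assoc, hu, neg_mul, mul_assoc, hv, mul_neg, neg_neg, mul_assoc]

lemma anticomm_diff_left (g a b : A) (hga : g * a = -(a * g)) (hgb : g * b = -(b * g)) :
    g * (a - b) = -((a - b) * g) := by
  rw [mul_sub, sub_mul, hga, hgb]; abel

lemma diff_anticomm (a b c e : A)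
    (h1 : c * a = -(a * c)) (h2 : c * b = -(b * c)) (h3 : e * a = -(a * e))
    (h4 : e * b = -(b * e)) :
    (a - b) * (c - e) = -((c - e) * (a - b)) := by
  simp only [sub_mul, mul_sub, h1, h2, h3, h4]; abel

lemma diff_sq (a b : A) (ha : a * a = 0) (hb : b * b = 0) (hba : b * a = -(a * b)) :
    (a - b) * (a - b) = 0 := by
  simp only [sub_mul, mul_sub, ha, hb, hba]; abel

lemma triple_identity (Xp Xq Xr Yp Yq Yr W : A)
    (hpp : Xp * Xp = 0)
    (hqp : Xq * Xp = -(Xp * Xq))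
    (hYpXp : Yp * Xp = -(Xp * Yp)) (hYpXq : Yp * Xq = -(Xq * Yp)) (hYpXr : Yp * Xr = -(Xr * Yp))
    (hYqXp : Yq * Xp = -(Xp * Yq)) (hYqXq : Yq * Xq = -(Xq * Yq)) (hYqXr : Yq * Xr = -(Xr * Yq))
    (hX : (Xp + Xq + Xr) * W = 0) (hY : (Yp + Yq + Yr) * W = 0) :
    Xp * (Xr * Yr * W) - Xp * (Xq * Yq * W) + Xq * (Xp * Yp * W) = 0 := by
  have key : Xp * Xr * Yr - Xp * Xq * Yq + Xq * Xp * Yp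
      = Xp * Xr * (Yp + Yq + Yr) + (Xp * Yp + Xp * Yq) * (Xp + Xq + Xr) := by
    have e1 : Xp * (Yp * Xp) = 0 := by rw [hYpXp, mul_neg, ← mul_assoc, hpp, zero_mul, neg_zero]
    have e2 : Xp * (Yq * Xp) = 0 := by rw [hYqXp, mul_neg, ← mul_assoc, hpp, zero_mul, neg_zero]
    have e3 : Xp * (Yp * Xr) = -(Xp * Xr * Yp) := by rw [hYpXr, mul_neg, ← mul_assoc]
    have e4 : Xp * (Yq * Xr) = -(Xp * Xr * Yq) := by rw [hYqXr, mul_neg, ← mul_assoc]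
    have e5 : Xp * (Yp * Xq) = -(Xp * Xq * Yp) := by rw [hYpXq, mul_neg, ← mul_assoc]
    have e6 : Xp * (Yq * Xq) = -(Xp * Xq * Yq) := by rw [hYqXq, mul_neg, ← mul_assoc]
    have expand : Xp * Xr * (Yp + Yq + Yr) + (Xp * Yp + Xp * Yq) * (Xp + Xq + Xr)
        = Xp * Xr * Yp + Xp * Xr * Yq + Xp * Xr * Yr
          + Xp * (Yp * Xp) + Xp * (Yp * Xq) + Xp * (Yp * Xr)
          + Xp * (Yq * Xp) + Xp * (Yq * Xq) + Xp * (Yq * Xr) := by noncomm_ring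
    rw [expand, e1, e2, e3, e4, e5, e6, hqp]
    noncomm_ring
  have hW : Xp * (Xr * Yr * W) - Xp * (Xq * Yq * W) + Xq * (Xp * Yp * W)
      = (Xp * Xr * Yr - Xp * Xq * Yq + Xq * Xp * Yp) * W := by noncomm_ring
  have fin : (Xp * Xr * (Yp + Yq + Yr) + (Xp * Yp + Xp * Yq) * (Xp + Xq + Xr)) * W
      = Xp * Xr * ((Yp + Yq + Yr) * W) + (Xp * Yp + Xp * Yq) * ((Xp + Xq + Xr) * W) := by
    noncomm_ring
  rw [hW, key, fin, hX, hY, mul_zero, mul_zero, add_zero]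

lemma prod_comm_of_comm {E : A} {l : List A} (h : ∀ g ∈ l, g * E = E * g) :
    l.prod * E = E * l.prod := by
  induction l with
  | nil => simp
  | cons a t ih =>
      have ha := h a (List.mem_cons_self)
      have ht := ih (fun g hg => h g (List.mem_cons_of_mem a hg))
      rw [List.prod_cons, mul_assoc, ht, ← mul_assoc, ha, mul_assoc]

lemma mul_prod_eq_zero {u : A} {l : List A} {v : A} (hv : v ∈ l) (huv : u * v = 0)
    (hcomm : ∀ g ∈ l, u * g = -(g * u)) : u * l.prod = 0 := by
  induction l with
  | nil => simp at hv
  | cons a t ih =>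
      rw [List.prod_cons, ← mul_assoc]
      rcases List.mem_cons.1 hv with rfl | hv'
      · rw [huv, zero_mul]
      · rw [hcomm a (List.mem_cons_self), neg_mul, mul_assoc,
          ih hv' (fun g hg => hcomm g (List.mem_cons_of_mem a hg)), mul_zero, neg_zero]
end PureRing

section Sorted
variable {k : ℕ}

lemma indexOf_eq_countP_lt {l : List (Fin k)} (hs : l.Pairwise (· < ·)) {a : Fin k} (ha : a ∈ l) :
    l.idxOf a = l.countP (fun b => decide (b < a)) := by
  induction l with
  | nil => simp at ha
  | cons c t ih =>
      rw [List.pairwise_cons] at hs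
      rcases List.mem_cons.1 ha with rfl | ha'
      · rw [List.idxOf_cons_self, List.countP_cons]
        simp only [decide_eq_true_eq, lt_irrefl, if_false]
        rw [List.countP_eq_zero.2, Nat.add_zero]
        intro b hb
        simp only [decide_eq_true_eq]
        exact not_lt.2 (hs.1 b hb).le
      · have hca : c < a := hs.1 a ha'
        rw [List.idxOf_cons_ne _ (by exact fun h => absurd h (ne_of_lt hca)),
          List.countP_cons, ih hs.2 ha']
        simp [hca]
end Sorted

lemma sum_positions {k : ℕ} {β : Type*} [AddCommMonoid β] (l : List (Fin k)) (hl : l.Nodup)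
    (z : Fin k) (F : ℕ → Fin k → β) :
    ∑ m ∈ Finset.range l.length, F m (l.getD m z) = ∑ a ∈ l.toFinset, F (l.idxOf a) a := by
  refine Finset.sum_nbij' (fun m => l.getD m z) (fun a => l.idxOf a) ?_ ?_ ?_ ?_ ?_
  · intro m hm
    have hm' := Finset.mem_range.1 hm
    rw [List.getD_eq_getElem l z hm']
    exact List.mem_toFinset.2 (l.getElem_mem hm')
  · intro a ha
    exact Finset.mem_range.2 (List.idxOf_lt_length_iff.2 (List.mem_toFinset.1 ha))
  · intro m hm
    have hm' := Finset.mem_range.1 hm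
    rw [List.getD_eq_getElem l z hm']
    exact List.Nodup.idxOf_getElem hl m hm'
  · intro a ha
    have h1 : l.idxOf a < l.length := List.idxOf_lt_length_iff.2 (List.mem_toFinset.1 ha)
    rw [List.getD_eq_getElem l z h1]
    exact List.getElem_idxOf h1
  · intro m hm
    have hm' := Finset.mem_range.1 hm
    rw [List.getD_eq_getElem l z hm', List.Nodup.idxOf_getElem hl m hm']

lemma countP_finRange (k : ℕ) (p : Fin k → Bool) :
    (List.finRange k).countP p = (Finset.univ.filter (fun b => p b = true)).card := by
  rw [List.countP_eq_length_filter,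
    ← List.toFinset_card_of_nodup ((List.nodup_finRange k).filter p),
    List.toFinset_filter, List.toFinset_finRange]

section Cards
variable {k : ℕ} {p q r : Fin k}

lemma cardC (hpq : p < q) (hqr : q < r) :
    (Finset.univ.filter (fun b : Fin k => b < p ∧ ¬b = q ∧ ¬b = r)).card = (p : ℕ) := by
  have h : (Finset.univ.filter (fun b : Fin k => b < p ∧ ¬b = q ∧ ¬b = r)) = Finset.Iio p := by
    ext b
    simp only [Finset.mem_filter, Finset.mem_univ, true_and, Finset.mem_Iio]
    constructor
    · exact fun h => h.1
    · intro hb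
      exact ⟨hb, ne_of_lt (lt_trans hb hpq), ne_of_lt (lt_trans hb (lt_trans hpq hqr))⟩
  rw [h, Fin.card_Iio]

lemma cardB (hpq : p < q) (hqr : q < r) :
    (Finset.univ.filter (fun b : Fin k => b < q ∧ ¬b = p ∧ ¬b = r)).card = (q : ℕ) - 1 := by
  have h : (Finset.univ.filter (fun b : Fin k => b < q ∧ ¬b = p ∧ ¬b = r))
      = (Finset.Iio q).erase p := by
    ext b
    simp only [Finset.mem_filter, Finset.mem_univ, true_and, Finset.mem_erase, Finset.mem_Iio]
    constructor
    · exact fun h => ⟨h.2.1, h.1⟩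
    · intro hb
      exact ⟨hb.2, hb.1, ne_of_lt (lt_trans hb.2 hqr)⟩
  rw [h, Finset.card_erase_of_mem (Finset.mem_Iio.2 hpq), Fin.card_Iio]

lemma cardA (hpq : p < q) (hqr : q < r) :
    (Finset.univ.filter (fun b : Fin k => b < r ∧ ¬b = p ∧ ¬b = q)).card = (r : ℕ) - 2 := by
  have h : (Finset.univ.filter (fun b : Fin k => b < r ∧ ¬b = p ∧ ¬b = q))
      = ((Finset.Iio r).erase p).erase q := by
    ext b
    simp only [Finset.mem_filter, Finset.mem_univ, true_and, Finset.mem_erase, Finset.mem_Iio]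
    constructor
    · exact fun h => ⟨h.2.2, h.2.1, h.1⟩
    · exact fun hb => ⟨hb.2.2, hb.2.1, hb.1⟩
  rw [h, Finset.card_erase_of_mem (Finset.mem_erase.2 ⟨ne_of_gt hpq, Finset.mem_Iio.2 hqr⟩),
    Finset.card_erase_of_mem (Finset.mem_Iio.2 (lt_trans hpq hqr)), Fin.card_Iio]
  omega

end Cards

section Deriv
variable {n : ℕ} {A : Type*} [Ring A] [Algebra ℚ A]
variable {x y : Fin n → A} {w : Sym2 (Fin n) → A} {d : A →ₗ[ℚ] A}

variable (hderiv : ∀ l : List A, (∀ a ∈ l, IsGen x y w a) →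
      d l.prod = ∑ i ∈ Finset.range l.length,
        ((-1 : ℚ) ^ i) • ((l.take i).prod * d (l.getD i 0) * (l.drop (i + 1)).prod))

include hderiv

lemma d_one : d 1 = 0 := by
  have := hderiv [] (by simp)
  simpa using this

lemma d_cons {g : A} (hg : IsGen x y w g) {l : List A} (hl : ∀ a ∈ l, IsGen x y w a) :
    d (g * l.prod) = d g * l.prod - g * d l.prod := by
  have h1 := hderiv (g :: l) (by
    intro a ha
    rcases List.mem_cons.1 ha with rfl | ha'
    · exact hg
    · exact hl a ha')
  have h2 := hderiv l hl
  rw [List.prod_cons] at h1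
  rw [h1, List.length_cons, Finset.sum_range_succ']
  have hs : ∀ i ∈ Finset.range l.length,
      ((-1:ℚ)^(i+1)) • (((g::l).take (i+1)).prod * d ((g::l).getD (i+1) 0) * ((g::l).drop (i+1+1)).prod)
      = -(g * ((-1:ℚ)^i • ((l.take i).prod * d (l.getD i 0) * (l.drop (i+1)).prod))) := by
    intro i _
    simp only [List.take_succ_cons, List.getD_cons_succ, List.drop_succ_cons, List.prod_cons]
    rw [pow_succ, mul_neg_one, neg_smul, mul_smul_comm]
    congr 2
    noncomm_ring
  rw [Finset.sum_congr rfl hs]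
  simp only [List.take_zero, List.getD_cons_zero, List.drop_one, List.prod_nil, pow_zero,
    one_smul, one_mul, List.tail_cons, zero_add]
  rw [Finset.sum_neg_distrib, ← Finset.mul_sum, ← h2]
  abel

lemma dP_general {k : ℕ} (f : Fin k → A) (hf : ∀ b, IsGen x y w (f b))
    (E : Fin k → A) (hdf : ∀ b, d (f b) = E b)
    (hcomm : ∀ (b : Fin k) (g : A), IsGen x y w g → g * E b = E b * g)
    (z : Fin k) (l : List (Fin k)) :
    d ((l.map f).prod) = ∑ m ∈ Finset.range l.length,
      ((-1:ℚ)^m) • (E (l.getD m z) * ((l.eraseIdx m).map f).prod) := by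
  induction l with
  | nil => simpa using d_one hderiv
  | cons a t ih =>
      have hmem : ∀ g ∈ t.map f, IsGen x y w g := by
        intro g hg
        rcases List.mem_map.1 hg with ⟨b, _, rfl⟩
        exact hf b
      rw [List.map_cons, List.prod_cons, d_cons hderiv (hf a) hmem, hdf a, ih,
        List.length_cons, Finset.sum_range_succ']
      rw [Finset.mul_sum]
      have h0 : ((-1:ℚ)^0) • (E ((a :: t).getD 0 z) * (List.map f ((a :: t).eraseIdx 0)).prod)
          = E a * (t.map f).prod := by simp
      have hshift : ∀ m ∈ Finset.range t.length,
          ((-1:ℚ)^(m+1)) • (E ((a :: t).getD (m+1) z) * (List.map f ((a :: t).eraseIdx (m+1))).prod)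
          = -(f a * ((-1:ℚ)^m • (E (t.getD m z) * (List.map f (t.eraseIdx m)).prod))) := by
        intro m _
        simp only [List.getD_cons_succ, List.eraseIdx_cons_succ, List.map_cons, List.prod_cons]
        rw [mul_smul_comm, pow_succ, mul_neg_one, neg_smul]
        have hc : f a * (E (t.getD m z) * ((t.eraseIdx m).map f).prod)
            = E (t.getD m z) * (f a * ((t.eraseIdx m).map f).prod) := by
          rw [← mul_assoc, hcomm _ _ (hf a), mul_assoc]
        rw [hc]
      rw [Finset.sum_congr rfl hshift, h0, Finset.sum_neg_distrib]
      abel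

end Deriv

section MainDefs
variable {n k : ℕ} {A : Type*} [Ring A]

/-- `X` or `Y` difference along an edge. -/
def XD (x : Fin n → A) (C : Fin k → Fin n × Fin n) (a : Fin k) : A := x (C a).2 - x (C a).1

/-- `ω` generator of an edge. -/
def WD (w : Sym2 (Fin n) → A) (C : Fin k → Fin n × Fin n) (a : Fin k) : A := w (Sym2.mk (C a).1 (C a).2)

/-- product of `ω`'s over an (ordered) list of edges -/
def PD (w : Sym2 (Fin n) → A) (C : Fin k → Fin n × Fin n) (l : List (Fin k)) : A :=
  (l.map (WD w C)).prod

/-- the ordered complement of a pair of edges -/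
def lpair (k : ℕ) (i j : Fin k) : List (Fin k) :=
  (List.finRange k).filter (fun a => a ≠ i ∧ a ≠ j)

/-- the ordered complement of a triple of edges -/
def T3 (k : ℕ) (u v t : Fin k) : List (Fin k) :=
  (List.finRange k).filter (fun b => b ≠ u ∧ b ≠ v ∧ b ≠ t)

end MainDefs

/-- In the Kriz/Bibby model `E₂` of the configuration space of `n` points on
an elliptic curve — i.e. in any `ℚ`-algebra with odd generators `x_i, y_i` (bidegree `(1,0)`)
and `ω_{i,j} = ω_e` for unordered edges `e` (bidegree `(0,1)`) which pairwise anticommute,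
satisfy `(x_i−x_j)ω_{ij} = 0`, `(y_i−y_j)ω_{ij} = 0` and the Arnold/Orlik–Solomon relations,
equipped with a linear map `d = d₂` which vanishes on the `x`'s and `y`'s, sends
`ω_{ij} ↦ (x_i−x_j)(y_i−y_j)`, and is an odd derivation on products of generators — the
element `L_C = Σ_{i<j}(−1)^{i+j}(x_{t(c_i)}−x_{s(c_i)})ω_{C∖{c_i,c_j}}` associated to any
circuit `C = (c_1,…,c_k)` of `K_n` lies in the kernel of `d₂`: `d₂(L_C) = 0`. -/
theorem d2_LC_eq_zero (n k : ℕ) [NeZero k] (A : Type*) [Ring A] [Algebra ℚ A]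
    (x y : Fin n → A) (w : Sym2 (Fin n) → A) (d : A →ₗ[ℚ] A)
    (hanti : ∀ a b : A, IsGen x y w a → IsGen x y w b → a * b = -(b * a))
    (hsq : ∀ a : A, IsGen x y w a → a * a = 0)
    (hxw : ∀ i j : Fin n, (x i - x j) * w s(i, j) = 0)
    (hyw : ∀ i j : Fin n, (y i - y j) * w s(i, j) = 0)
    (harnold : ∀ i j l : Fin n,
      w s(i, j) * w s(j, l) + w s(j, l) * w s(i, l) + w s(i, l) * w s(i, j) = 0)
    (hdx : ∀ i, d (x i) = 0) (hdy : ∀ i, d (y i) = 0)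
    (hdw : ∀ i j : Fin n, d (w s(i, j)) = (x i - x j) * (y i - y j))
    (hderiv : ∀ l : List A, (∀ a ∈ l, IsGen x y w a) →
      d l.prod = ∑ i ∈ Finset.range l.length,
        ((-1 : ℚ) ^ i) • ((l.take i).prod * d (l.getD i 0) * (l.drop (i + 1)).prod))
    (C : Fin k → Fin n × Fin n)
    (hcirc : ∀ i, (C i).2 = (C (i + 1)).1)
    (hinj : Function.Injective (fun i => (C i).1)) :
    d (∑ p ∈ Finset.univ.filter (fun p : Fin k × Fin k => p.1 < p.2),
        ((-1 : ℚ) ^ ((p.1 : ℕ) + (p.2 : ℕ))) •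
          ((x (C p.1).2 - x (C p.1).1) *
            (((List.finRange k).filter (fun a => a ≠ p.1 ∧ a ≠ p.2)).map
              (fun a => w (Sym2.mk (C a).1 (C a).2))).prod)) = 0 := by
  classical
  have hk : 0 < k := Nat.pos_of_ne_zero (NeZero.ne k)
  have z : Fin k := ⟨0, hk⟩
  -- generators
  have hgx : ∀ i, IsGen x y w (x i) := fun i => Or.inl ⟨i, rfl⟩
  have hgy : ∀ i, IsGen x y w (y i) := fun i => Or.inr (Or.inl ⟨i, rfl⟩)
  have hgw : ∀ e, IsGen x y w (w e) := fun e => Or.inr (Or.inr ⟨e, rfl⟩)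
  have hgW : ∀ a : Fin k, IsGen x y w (WD w C a) := fun a => hgw _
  -- anticommutation of differences with generators
  have hXg : ∀ (a : Fin k) (g : A), IsGen x y w g → g * XD x C a = -(XD x C a * g) :=
    fun a g hg => anticomm_diff_left g _ _ (hanti g _ hg (hgx _)) (hanti g _ hg (hgx _))
  have hYg : ∀ (a : Fin k) (g : A), IsGen x y w g → g * XD y C a = -(XD y C a * g) :=
    fun a g hg => anticomm_diff_left g _ _ (hanti g _ hg (hgy _)) (hanti g _ hg (hgy _))
  have hdW : ∀ a : Fin k, d (WD w C a) = XD x C a * XD y C a := by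
    intro a
    have h0 : d (w (Sym2.mk (C a).1 (C a).2)) = (x (C a).1 - x (C a).2) * (y (C a).1 - y (C a).2) :=
      hdw (C a).1 (C a).2
    rw [WD, h0, XD, XD, ← neg_sub (x (C a).1), ← neg_sub (y (C a).1), neg_mul_neg]
  have hEcomm : ∀ (b : Fin k) (g : A), IsGen x y w g →
      g * (XD x C b * XD y C b) = (XD x C b * XD y C b) * g :=
    fun b g hg => odd_pair_comm g _ _ (hXg b g hg) (hYg b g hg)
  -- X_b, Y_b annihilate products containing ω_b
  have hXP : ∀ (b : Fin k) (l : List (Fin k)), b ∈ l → XD x C b * PD w C l = 0 := by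
    intro b l hb
    rw [PD]
    refine mul_prod_eq_zero (List.mem_map_of_mem (f := WD w C) hb) ?_ ?_
    · have h0 : (x (C b).1 - x (C b).2) * w (Sym2.mk (C b).1 (C b).2) = 0 := hxw (C b).1 (C b).2
      have h1 : XD x C b = -(x (C b).1 - x (C b).2) := by rw [XD, neg_sub]
      rw [WD, h1, neg_mul, h0, neg_zero]
    · intro g hg
      rcases List.mem_map.1 hg with ⟨c, _, rfl⟩
      have h := hXg b (WD w C c) (hgW c)
      rw [h, neg_neg]
  have hYP : ∀ (b : Fin k) (l : List (Fin k)), b ∈ l → XD y C b * PD w C l = 0 := by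
    intro b l hb
    rw [PD]
    refine mul_prod_eq_zero (List.mem_map_of_mem (f := WD w C) hb) ?_ ?_
    · have h0 : (y (C b).1 - y (C b).2) * w (Sym2.mk (C b).1 (C b).2) = 0 := hyw (C b).1 (C b).2
      have h1 : XD y C b = -(y (C b).1 - y (C b).2) := by rw [XD, neg_sub]
      rw [WD, h1, neg_mul, h0, neg_zero]
    · intro g hg
      rcases List.mem_map.1 hg with ⟨c, _, rfl⟩
      have h := hYg b (WD w C c) (hgW c)
      rw [h, neg_neg]
  -- telescoping sums
  have htelX : (∑ b : Fin k, XD x C b) = 0 := by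
    have h1 : (∑ b : Fin k, x (C b).2) = ∑ b : Fin k, x (C (b + 1)).1 :=
      Finset.sum_congr rfl fun b _ => by rw [hcirc b]
    have h2 : (∑ b : Fin k, x (C (b + 1)).1) = ∑ b : Fin k, x (C b).1 :=
      Fintype.sum_equiv (Equiv.addRight (1 : Fin k)) _ _ (fun b => rfl)
    simp only [XD]
    rw [Finset.sum_sub_distrib, h1, h2, sub_self]
  have htelY : (∑ b : Fin k, XD y C b) = 0 := by
    have h1 : (∑ b : Fin k, y (C b).2) = ∑ b : Fin k, y (C (b + 1)).1 :=
      Finset.sum_congr rfl fun b _ => by rw [hcirc b]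
    have h2 : (∑ b : Fin k, y (C (b + 1)).1) = ∑ b : Fin k, y (C b).1 :=
      Fintype.sum_equiv (Equiv.addRight (1 : Fin k)) _ _ (fun b => rfl)
    simp only [XD]
    rw [Finset.sum_sub_distrib, h1, h2, sub_self]
  -- the triple sum relations
  have hXtriple : ∀ p q r : Fin k, p < q → q < r →
      (XD x C p + XD x C q + XD x C r) * PD w C (T3 k p q r) = 0 := by
    intro p q r hpq hqr
    have hps : ∑ b ∈ ({p, q, r} : Finset (Fin k)), XD x C b
        = XD x C p + XD x C q + XD x C r := by
      rw [Finset.sum_insert (by simp [hpq.ne, (hpq.trans hqr).ne]),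
        Finset.sum_insert (by simp [hqr.ne]), Finset.sum_singleton, add_assoc]
    have hcompl := Finset.sum_add_sum_compl ({p, q, r} : Finset (Fin k)) (XD x C)
    rw [htelX, hps] at hcompl
    rw [eq_neg_of_add_eq_zero_left hcompl, neg_mul, Finset.sum_mul, Finset.sum_eq_zero, neg_zero]
    intro b hb
    have hb' : ¬b = p ∧ ¬b = q ∧ ¬b = r := by
      simpa [Finset.mem_compl, not_or] using hb
    exact hXP b (T3 k p q r)
      (by simp [T3, List.mem_filter, List.mem_finRange, hb'.1, hb'.2.1, hb'.2.2])
  have hYtriple : ∀ p q r : Fin k, p < q → q < r →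
      (XD y C p + XD y C q + XD y C r) * PD w C (T3 k p q r) = 0 := by
    intro p q r hpq hqr
    have hps : ∑ b ∈ ({p, q, r} : Finset (Fin k)), XD y C b
        = XD y C p + XD y C q + XD y C r := by
      rw [Finset.sum_insert (by simp [hpq.ne, (hpq.trans hqr).ne]),
        Finset.sum_insert (by simp [hqr.ne]), Finset.sum_singleton, add_assoc]
    have hcompl := Finset.sum_add_sum_compl ({p, q, r} : Finset (Fin k)) (XD y C)
    rw [htelY, hps] at hcompl
    rw [eq_neg_of_add_eq_zero_left hcompl, neg_mul, Finset.sum_mul, Finset.sum_eq_zero, neg_zero]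
    intro b hb
    have hb' : ¬b = p ∧ ¬b = q ∧ ¬b = r := by
      simpa [Finset.mem_compl, not_or] using hb
    exact hYP b (T3 k p q r)
      (by simp [T3, List.mem_filter, List.mem_finRange, hb'.1, hb'.2.1, hb'.2.2])
  -- nodup / sorted facts
  have hnodup : ∀ i j : Fin k, (lpair k i j).Nodup :=
    fun i j => (List.nodup_finRange k).filter _
  have hsorted : ∀ i j : Fin k, (lpair k i j).Pairwise (· < ·) :=
    fun i j => (List.pairwise_lt_finRange k).filter _
  -- erasing the found index gives the triple complement
  have hT3e : ∀ i j a : Fin k,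
      (lpair k i j).eraseIdx ((lpair k i j).idxOf a) = T3 k i j a := by
    intro i j a
    rw [← List.erase_eq_eraseIdx_of_idxOf rfl, (hnodup i j).erase_eq_filter, lpair, List.filter_filter, T3]
    refine List.filter_congr fun b _ => ?_
    by_cases h1 : b = a <;> by_cases h2 : b = i <;> by_cases h3 : b = j <;> simp [h1, h2, h3]
  -- derivative of products
  have hdP : ∀ l : List (Fin k), d (PD w C l) = ∑ m ∈ Finset.range l.length,
      ((-1:ℚ)^m) • ((XD x C (l.getD m z) * XD y C (l.getD m z)) * PD w C (l.eraseIdx m)) :=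
    fun l => dP_general hderiv (WD w C) hgW _ hdW hEcomm z l
  have hdXP : ∀ (i : Fin k) (l : List (Fin k)),
      d (XD x C i * PD w C l) = -(XD x C i * d (PD w C l)) := by
    intro i l
    have hmem : ∀ g ∈ l.map (WD w C), IsGen x y w g := by
      intro g hg; rcases List.mem_map.1 hg with ⟨c, _, rfl⟩; exact hgW c
    have e : XD x C i * PD w C l
        = x (C i).2 * (l.map (WD w C)).prod - x (C i).1 * (l.map (WD w C)).prod := by
      rw [XD, PD, sub_mul]
    rw [e, map_sub, d_cons hderiv (hgx _) hmem, d_cons hderiv (hgx _) hmem, hdx, hdx,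
      zero_mul, zero_sub, zero_sub, XD, PD, sub_mul]
    abel
  -- per-pair reduction
  have step1 : ∀ i j : Fin k,
      ((-1:ℚ) ^ ((i:ℕ) + (j:ℕ))) • d (XD x C i * PD w C (lpair k i j))
      = ∑ a ∈ (lpair k i j).toFinset,
          (-((-1:ℚ) ^ ((i:ℕ) + (j:ℕ)) * (-1:ℚ) ^ ((lpair k i j).idxOf a))) •
            (XD x C i * ((XD x C a * XD y C a) * PD w C (T3 k i j a))) := by
    intro i j
    rw [hdXP, hdP, Finset.mul_sum, ← Finset.sum_neg_distrib, Finset.smul_sum]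
    have hterm : ∀ m ∈ Finset.range (lpair k i j).length,
        ((-1:ℚ) ^ ((i:ℕ) + (j:ℕ))) •
          -(XD x C i * (((-1:ℚ)^m) •
            ((XD x C ((lpair k i j).getD m z) * XD y C ((lpair k i j).getD m z)) *
              PD w C ((lpair k i j).eraseIdx m))))
        = (-((-1:ℚ) ^ ((i:ℕ) + (j:ℕ)) * (-1:ℚ)^m)) •
            (XD x C i * ((XD x C ((lpair k i j).getD m z) * XD y C ((lpair k i j).getD m z)) *
              PD w C ((lpair k i j).eraseIdx m))) := by
      intro m _
      rw [mul_smul_comm, ← neg_smul, smul_smul, mul_neg]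
    rw [Finset.sum_congr rfl hterm]
    have hpos := sum_positions (lpair k i j) (hnodup i j) z
      (fun m a => (-((-1:ℚ) ^ ((i:ℕ) + (j:ℕ)) * (-1:ℚ)^m)) •
        (XD x C i * ((XD x C a * XD y C a) * PD w C ((lpair k i j).eraseIdx m))))
    rw [hpos]
    exact Finset.sum_congr rfl fun a _ => by rw [hT3e i j a]
  -- rewrite the goal
  show d (∑ p ∈ Finset.univ.filter (fun p : Fin k × Fin k => p.1 < p.2),
      ((-1 : ℚ) ^ ((p.1 : ℕ) + (p.2 : ℕ))) • (XD x C p.1 * PD w C (lpair k p.1 p.2))) = 0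
  rw [map_sum]
  have e1 : (∑ p ∈ Finset.univ.filter (fun p : Fin k × Fin k => p.1 < p.2),
        d (((-1 : ℚ) ^ ((p.1 : ℕ) + (p.2 : ℕ))) • (XD x C p.1 * PD w C (lpair k p.1 p.2))))
      = ∑ p ∈ Finset.univ.filter (fun p : Fin k × Fin k => p.1 < p.2),
          ∑ a ∈ (lpair k p.1 p.2).toFinset,
            (-((-1:ℚ) ^ ((p.1:ℕ) + (p.2:ℕ)) * (-1:ℚ) ^ ((lpair k p.1 p.2).idxOf a))) •
              (XD x C p.1 * ((XD x C a * XD y C a) * PD w C (T3 k p.1 p.2 a))) :=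
    Finset.sum_congr rfl fun p _ => by rw [map_smul]; exact step1 p.1 p.2
  rw [e1, Finset.sum_sigma']
  -- transfer to the triple set
  have hbij :
      (∑ s ∈ (Finset.univ.filter (fun p : Fin k × Fin k => p.1 < p.2)).sigma
          (fun p => (lpair k p.1 p.2).toFinset),
        (-((-1:ℚ) ^ ((s.1.1:ℕ) + (s.1.2:ℕ)) * (-1:ℚ) ^ ((lpair k s.1.1 s.1.2).idxOf s.2))) •
          (XD x C s.1.1 * ((XD x C s.2 * XD y C s.2) * PD w C (T3 k s.1.1 s.1.2 s.2))))
      = ∑ t ∈ Finset.univ.filter (fun t : Fin k × Fin k × Fin k =>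
            t.1 < t.2.1 ∧ t.2.2 ≠ t.1 ∧ t.2.2 ≠ t.2.1),
          (-((-1:ℚ) ^ ((t.1:ℕ) + (t.2.1:ℕ)) * (-1:ℚ) ^ ((lpair k t.1 t.2.1).idxOf t.2.2))) •
            (XD x C t.1 * ((XD x C t.2.2 * XD y C t.2.2) * PD w C (T3 k t.1 t.2.1 t.2.2))) := by
    refine Finset.sum_nbij' (fun s => (s.1.1, s.1.2, s.2)) (fun t => ⟨(t.1, t.2.1), t.2.2⟩)
      ?_ ?_ ?_ ?_ ?_
    · intro s hs
      simp only [Finset.mem_sigma, Finset.mem_filter, Finset.mem_univ, true_and,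
        List.mem_toFinset, lpair, List.mem_filter, List.mem_finRange, true_and,
        decide_eq_true_eq] at hs ⊢
      exact ⟨hs.1, hs.2⟩
    · intro t ht
      simp only [Finset.mem_sigma, Finset.mem_filter, Finset.mem_univ, true_and,
        List.mem_toFinset, lpair, List.mem_filter, List.mem_finRange, true_and,
        decide_eq_true_eq] at ht ⊢
      exact ⟨ht.1, ht.2⟩
    · intro s _; rfl
    · intro t _; rfl
    · intro s _; rfl
  rw [hbij]
  -- group the triple sum into fibers over sorted triples
  rw [← Finset.sum_fiberwise_of_maps_to (g := fun t : Fin k × Fin k × Fin k =>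
      if t.2.2 < t.1 then (t.2.2, t.1, t.2.1)
      else if t.2.2 < t.2.1 then (t.1, t.2.2, t.2.1) else (t.1, t.2.1, t.2.2))
    (t := Finset.univ.filter (fun t : Fin k × Fin k × Fin k => t.1 < t.2.1 ∧ t.2.1 < t.2.2)) ?_]
  swap
  · intro t ht
    simp only [Finset.mem_filter, Finset.mem_univ, true_and] at ht ⊢
    obtain ⟨h1, h2, h3⟩ := ht
    split_ifs with ha hb
    · exact ⟨ha, h1⟩
    · exact ⟨lt_of_le_of_ne (not_lt.1 ha) (Ne.symm h2), hb⟩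
    · exact ⟨h1, lt_of_le_of_ne (not_lt.1 hb) (Ne.symm h3)⟩
  refine Finset.sum_eq_zero fun u hu => ?_
  obtain ⟨p, q, r⟩ := u
  simp only [Finset.mem_filter, Finset.mem_univ, true_and] at hu
  obtain ⟨hpq, hqr⟩ := hu
  -- compute the fiber
  have hfiber : (Finset.univ.filter (fun t : Fin k × Fin k × Fin k =>
        t.1 < t.2.1 ∧ t.2.2 ≠ t.1 ∧ t.2.2 ≠ t.2.1)).filter
      (fun t => (if t.2.2 < t.1 then (t.2.2, t.1, t.2.1)
        else if t.2.2 < t.2.1 then (t.1, t.2.2, t.2.1) else (t.1, t.2.1, t.2.2)) = (p, q, r))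
      = ({(p, q, r), (p, r, q), (q, r, p)} : Finset (Fin k × Fin k × Fin k)) := by
    ext ⟨i, j, a⟩
    simp only [Finset.mem_filter, Finset.mem_univ, true_and, Finset.mem_insert,
      Finset.mem_singleton, Prod.mk.injEq]
    constructor
    · rintro ⟨⟨h1, h2, h3⟩, heq⟩
      split_ifs at heq with ha hb
      · simp only [Prod.mk.injEq] at heq
        obtain ⟨e1, e2, e3⟩ := heq
        exact Or.inr (Or.inr ⟨e2, e3, e1⟩)
      · simp only [Prod.mk.injEq] at heq
        obtain ⟨e1, e2, e3⟩ := heq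
        exact Or.inr (Or.inl ⟨e1, e3, e2⟩)
      · simp only [Prod.mk.injEq] at heq
        obtain ⟨e1, e2, e3⟩ := heq
        exact Or.inl ⟨e1, e2, e3⟩
    · rintro (⟨e1, e2, e3⟩ | ⟨e1, e2, e3⟩ | ⟨e1, e2, e3⟩) <;> subst e1 <;> subst e2 <;> subst e3
      · refine ⟨⟨hpq, (hpq.trans hqr).ne', hqr.ne'⟩, ?_⟩
        rw [if_neg (not_lt.2 (hpq.trans hqr).le), if_neg (not_lt.2 hqr.le)]
      · refine ⟨⟨hpq.trans hqr, hpq.ne', hqr.ne⟩, ?_⟩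
        rw [if_neg (not_lt.2 hpq.le), if_pos hqr]
      · refine ⟨⟨hqr, hpq.ne, (hpq.trans hqr).ne⟩, ?_⟩
        rw [if_pos hpq]
  rw [hfiber]
  have hne1 : ((p, q, r) : Fin k × Fin k × Fin k)
      ∉ ({(p, r, q), (q, r, p)} : Finset (Fin k × Fin k × Fin k)) := by
    simp [Prod.mk.injEq, hpq.ne, hqr.ne]
  have hne2 : ((p, r, q) : Fin k × Fin k × Fin k)
      ∉ ({(q, r, p)} : Finset (Fin k × Fin k × Fin k)) := by
    simp [Prod.mk.injEq, hpq.ne]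
  rw [Finset.sum_insert hne1, Finset.sum_insert hne2, Finset.sum_singleton]
  dsimp only
  -- compute the index positions
  have hidx : ∀ i j a : Fin k, a ≠ i → a ≠ j → (lpair k i j).idxOf a
      = (Finset.univ.filter (fun b : Fin k => b < a ∧ ¬b = i ∧ ¬b = j)).card := by
    intro i j a ha1 ha2
    rw [indexOf_eq_countP_lt (hsorted i j)
      (by simp [lpair, List.mem_filter, List.mem_finRange, ha1, ha2]),
      lpair, List.countP_filter, countP_finRange]
    refine congrArg Finset.card (Finset.filter_congr fun b _ => ?_)
    simp only [Bool.and_eq_true, decide_eq_true_eq, ne_eq]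
  have hi1 : (lpair k p q).idxOf r = (r : ℕ) - 2 := by
    rw [hidx p q r (hpq.trans hqr).ne' hqr.ne']; exact cardA hpq hqr
  have hi2 : (lpair k p r).idxOf q = (q : ℕ) - 1 := by
    rw [hidx p r q hpq.ne' hqr.ne]; exact cardB hpq hqr
  have hi3 : (lpair k q r).idxOf p = (p : ℕ) := by
    rw [hidx q r p hpq.ne (hpq.trans hqr).ne]; exact cardC hpq hqr
  -- identify the triple complements
  have hp1 : T3 k p r q = T3 k p q r :=
    List.filter_congr fun b _ => by simp only [decide_eq_decide]; tauto
  have hp2 : T3 k q r p = T3 k p q r :=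
    List.filter_congr fun b _ => by simp only [decide_eq_decide]; tauto
  -- sign bookkeeping
  have hpqn : (p : ℕ) < (q : ℕ) := hpq
  have hqrn : (q : ℕ) < (r : ℕ) := hqr
  have hs1 : (-((-1:ℚ) ^ ((p:ℕ) + (q:ℕ)) * (-1:ℚ) ^ ((r:ℕ) - 2)))
      = -(-1:ℚ) ^ ((p:ℕ) + (q:ℕ) + (r:ℕ)) := by
    obtain ⟨m, hm⟩ : ∃ m, (r : ℕ) = m + 2 := ⟨(r : ℕ) - 2, by omega⟩
    rw [hm]
    simp only [Nat.add_sub_cancel, pow_add, pow_succ]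
    ring
  have hs2 : (-((-1:ℚ) ^ ((p:ℕ) + (r:ℕ)) * (-1:ℚ) ^ ((q:ℕ) - 1)))
      = (-1:ℚ) ^ ((p:ℕ) + (q:ℕ) + (r:ℕ)) := by
    obtain ⟨m, hm⟩ : ∃ m, (q : ℕ) = m + 1 := ⟨(q : ℕ) - 1, by omega⟩
    rw [hm]
    simp only [Nat.add_sub_cancel, pow_add, pow_succ]
    ring
  have hs3 : (-((-1:ℚ) ^ ((q:ℕ) + (r:ℕ)) * (-1:ℚ) ^ ((p:ℕ))))
      = -(-1:ℚ) ^ ((p:ℕ) + (q:ℕ) + (r:ℕ)) := by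
    rw [← pow_add]
    have : (q:ℕ) + (r:ℕ) + (p:ℕ) = (p:ℕ) + (q:ℕ) + (r:ℕ) := by ring
    rw [this]
  rw [hi1, hi2, hi3, hp1, hp2, hs1, hs2, hs3]
  -- the algebraic identity
  have htri : XD x C p * (XD x C r * XD y C r * PD w C (T3 k p q r))
      - XD x C p * (XD x C q * XD y C q * PD w C (T3 k p q r))
      + XD x C q * (XD x C p * XD y C p * PD w C (T3 k p q r)) = 0 :=
    triple_identity _ _ _ _ _ _ _
      (diff_sq _ _ (hsq _ (hgx _)) (hsq _ (hgx _)) (hanti _ _ (hgx _) (hgx _)))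
      (diff_anticomm _ _ _ _ (hanti _ _ (hgx _) (hgx _)) (hanti _ _ (hgx _) (hgx _))
        (hanti _ _ (hgx _) (hgx _)) (hanti _ _ (hgx _) (hgx _)))
      (diff_anticomm _ _ _ _ (hanti _ _ (hgx _) (hgy _)) (hanti _ _ (hgx _) (hgy _))
        (hanti _ _ (hgx _) (hgy _)) (hanti _ _ (hgx _) (hgy _)))
      (diff_anticomm _ _ _ _ (hanti _ _ (hgx _) (hgy _)) (hanti _ _ (hgx _) (hgy _))
        (hanti _ _ (hgx _) (hgy _)) (hanti _ _ (hgx _) (hgy _)))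
      (diff_anticomm _ _ _ _ (hanti _ _ (hgx _) (hgy _)) (hanti _ _ (hgx _) (hgy _))
        (hanti _ _ (hgx _) (hgy _)) (hanti _ _ (hgx _) (hgy _)))
      (diff_anticomm _ _ _ _ (hanti _ _ (hgx _) (hgy _)) (hanti _ _ (hgx _) (hgy _))
        (hanti _ _ (hgx _) (hgy _)) (hanti _ _ (hgx _) (hgy _)))
      (diff_anticomm _ _ _ _ (hanti _ _ (hgx _) (hgy _)) (hanti _ _ (hgx _) (hgy _))
        (hanti _ _ (hgx _) (hgy _)) (hanti _ _ (hgx _) (hgy _)))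
      (diff_anticomm _ _ _ _ (hanti _ _ (hgx _) (hgy _)) (hanti _ _ (hgx _) (hgy _))
        (hanti _ _ (hgx _) (hgy _)) (hanti _ _ (hgx _) (hgy _)))
      (hXtriple p q r hpq hqr) (hYtriple p q r hpq hqr)
  have hfin : (-(-1:ℚ) ^ ((p:ℕ) + (q:ℕ) + (r:ℕ))) •
        (XD x C p * (XD x C r * XD y C r * PD w C (T3 k p q r)))
      + (((-1:ℚ) ^ ((p:ℕ) + (q:ℕ) + (r:ℕ))) •
        (XD x C p * (XD x C q * XD y C q * PD w C (T3 k p q r)))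
      + (-(-1:ℚ) ^ ((p:ℕ) + (q:ℕ) + (r:ℕ))) •
        (XD x C q * (XD x C p * XD y C p * PD w C (T3 k p q r))))
      = (-(-1:ℚ) ^ ((p:ℕ) + (q:ℕ) + (r:ℕ))) •
        (XD x C p * (XD x C r * XD y C r * PD w C (T3 k p q r))
          - XD x C p * (XD x C q * XD y C q * PD w C (T3 k p q r))
          + XD x C q * (XD x C p * XD y C p * PD w C (T3 k p q r))) := by
    module
  rw [hfin, htri, smul_zero]
end
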